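/- arXiv:1908.10346 — 3 statements merged into one kernel-verified Lean document; each statement's English description precedes it below -/
import Mathlib

section
/- Let p be an odd prime, β ≥ 2, and 1 ≤ α ≤ β. Let χ₁, χ₂ be Dirichlet characters modulo p^β and let ℓ_{χ₁}, ℓ_{χ₂} ∈ ℤ/p^{β−1}ℤ be their Postnikov parameters, i.e. χᵢ(1+pt) = e_{p^β}(ℓ_{χᵢ} log_p(1+pt)) for all t. Then ℓ_{χ₁} ≡ ℓ_{χ₂} (mod p^{β−α}) if and only if χ₁ · conj(χ₂) factors through (ℤ/p^αℤ)^×, i.e. is induced by a Dirichlet character modulo p^α. -/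
/-- `PostnikovParam p β χ ℓχ` says that the Postnikov formula
`χ(1+pt) = e_{p^β}(ℓχ · log_p(1+pt))` holds for every integer `t`, where
`log_p(1+pt)` is expressed through its convergent power series in `ℚ_p` and
`e_{p^β}(y) = e^{2πi (y mod p^β)/p^β}` for `y ∈ ℤ_p`. -/
def PostnikovParam (p β : ℕ) [Fact p.Prime]
    (χ : DirichletCharacter ℂ (p ^ β)) (ℓχ : ZMod (p ^ (β - 1))) : Prop :=
  ∀ (t : ℤ) (y : ℤ_[p]),
    ((y : ℚ_[p]) =
      ∑' n : ℕ, (-1 : ℚ_[p]) ^ n * ((p : ℚ_[p]) * (t : ℚ_[p])) ^ (n + 1) / (n + 1)) →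
    χ ((1 + p * t : ℤ) : ZMod (p ^ β)) =
      Complex.exp (2 * Real.pi * Complex.I *
        ((PadicInt.toZModPow β ((ℓχ.val : ℤ_[p]) * y)).val : ℂ) / ((p : ℂ) ^ β))

open scoped BigOperators
set_option maxHeartbeats 1000000

namespace PostnikovAux

variable (p : ℕ) [hp : Fact p.Prime]

/-- The terms of the p-adic logarithm series of `1 + p t`. -/
noncomputable def logSeries (t : ℤ) : ℕ → ℚ_[p] :=
  fun n => (-1 : ℚ_[p]) ^ n * ((p : ℚ_[p]) * (t : ℚ_[p])) ^ (n + 1) / (n + 1)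

lemma norm_natCast_eq (k : ℕ) (hk : k ≠ 0) :
    ‖((k : ℕ) : ℚ_[p])‖ = (p : ℝ) ^ (-(padicValNat p k : ℤ)) := by
  rw [Padic.norm_eq_zpow_neg_valuation (by exact_mod_cast hk), Padic.valuation_natCast]

lemma norm_term_le (t : ℤ) (m : ℕ) (ht : (p : ℤ) ^ m ∣ p * t) (n c : ℕ)
    (hc : padicValNat p (n + 1) + c ≤ m * (n + 1)) :
    ‖logSeries p t n‖ ≤ (p : ℝ) ^ (-(c : ℤ)) := by
  have hp1 : (1 : ℝ) < p := by exact_mod_cast hp.out.one_lt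
  have hpt : ((p : ℚ_[p]) * (t : ℚ_[p])) = (((p * t : ℤ)) : ℚ_[p]) := by push_cast; ring
  have hnorm_pt : ‖((p * t : ℤ) : ℚ_[p])‖ ≤ (p : ℝ) ^ (-(m : ℤ)) :=
    (Padic.norm_int_le_pow_iff_dvd _ _).2 ht
  have hn1 : ((n : ℚ_[p]) + 1) = (((n + 1 : ℕ)) : ℚ_[p]) := by push_cast; ring
  set v : ℕ := padicValNat p (n + 1) with hv
  have hnorm_n1 : ‖((n : ℚ_[p]) + 1)‖ = (p : ℝ) ^ (-(v : ℤ)) := by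
    rw [hn1, norm_natCast_eq p _ (Nat.succ_ne_zero n)]
  have h1 : ‖logSeries p t n‖ = ‖((p : ℚ_[p]) * (t : ℚ_[p])) ^ (n + 1)‖ / (p : ℝ) ^ (-(v : ℤ)) := by
    rw [logSeries, norm_div, norm_mul, norm_pow, norm_neg, norm_one, one_pow, one_mul, hnorm_n1]
  rw [h1, hpt, norm_pow]
  have h2 : ‖((p * t : ℤ) : ℚ_[p])‖ ^ (n + 1) ≤ ((p : ℝ) ^ (-(m : ℤ))) ^ (n + 1) :=
    pow_le_pow_left₀ (norm_nonneg _) hnorm_pt _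
  have h3 : ((p : ℝ) ^ (-(m : ℤ))) ^ (n + 1) = (p : ℝ) ^ ((-(m : ℤ)) * (n + 1)) := by
    rw [← zpow_natCast ((p:ℝ) ^ (-(m:ℤ))) (n+1), ← zpow_mul]
    norm_num
  have hppos : (0 : ℝ) < (p : ℝ) ^ (-(v : ℤ)) := zpow_pos (by positivity) _
  rw [div_le_iff₀ hppos]
  calc ‖((p * t : ℤ) : ℚ_[p])‖ ^ (n + 1) ≤ (p : ℝ) ^ ((-(m : ℤ)) * (n + 1)) := h3 ▸ h2
    _ ≤ (p : ℝ) ^ (-(c : ℤ) + -(v : ℤ)) := by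
        apply zpow_le_zpow_right₀ (le_of_lt hp1)
        have h5 : (v : ℤ) + c ≤ (m : ℤ) * (n + 1) := by exact_mod_cast hc
        push_cast
        linarith
    _ = (p : ℝ) ^ (-(c : ℤ)) * (p : ℝ) ^ (-(v : ℤ)) := by
        rw [← zpow_add₀ (by positivity : (p:ℝ) ≠ 0)]

lemma padicValNat_succ_le (m n : ℕ) (hm : 1 ≤ m) : padicValNat p (n + 1) ≤ m * n := by
  rcases Nat.eq_zero_or_pos n with rfl | hn
  · simp
  have h2 : p ^ padicValNat p (n + 1) ≤ n + 1 :=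
    Nat.le_of_dvd (Nat.succ_pos n) pow_padicValNat_dvd
  have h4 : p ^ padicValNat p (n + 1) ≤ p ^ (m * n) := by
    calc p ^ padicValNat p (n + 1) ≤ n + 1 := h2
      _ ≤ 2 ^ n := Nat.lt_two_pow_self
      _ ≤ p ^ n := Nat.pow_le_pow_left hp.out.two_le n
      _ ≤ p ^ (m * n) := Nat.pow_le_pow_right hp.out.pos (by nlinarith)
  exact (Nat.pow_le_pow_iff_right hp.out.one_lt).1 h4

lemma add_two_le_three_pow (n : ℕ) (hn : 1 ≤ n) : n + 2 ≤ 3 ^ n := by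
  induction n with
  | zero => omega
  | succ k ih =>
    rcases Nat.eq_zero_or_pos k with rfl | hk
    · norm_num
    · have h1 := ih hk
      calc k + 1 + 2 ≤ 3 ^ k + 1 := by omega
        _ ≤ 3 ^ (k + 1) := by
            rw [pow_succ]
            have h3 : (1:ℕ) ≤ 3 ^ k := Nat.one_le_pow _ _ (by norm_num)
            omega

lemma padicValNat_succ_lt (m n : ℕ) (hm : 1 ≤ m) (hn : 1 ≤ n) (h3 : 3 ≤ p) :
    padicValNat p (n + 1) + 1 ≤ m * n := by
  have h2 : p ^ padicValNat p (n + 1) ≤ n + 1 :=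
    Nat.le_of_dvd (Nat.succ_pos n) pow_padicValNat_dvd
  have h4 : p ^ padicValNat p (n + 1) < p ^ (m * n) := by
    calc p ^ padicValNat p (n + 1) ≤ n + 1 := h2
      _ < 3 ^ n := by have := add_two_le_three_pow n hn; omega
      _ ≤ p ^ n := Nat.pow_le_pow_left h3 n
      _ ≤ p ^ (m * n) := Nat.pow_le_pow_right hp.out.pos (by nlinarith)
  have := (Nat.pow_lt_pow_iff_right hp.out.one_lt).1 h4
  omega

lemma summable_logSeries (t : ℤ) : Summable (logSeries p t) := by
  have hp1 : (1 : ℝ) < p := by exact_mod_cast hp.out.one_lt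
  refine Summable.of_norm_bounded (g := fun n => ((n:ℝ) + 1) * ((p : ℝ)⁻¹) ^ (n + 1)) ?_ ?_
  · have hs : Summable (fun n : ℕ => (n : ℝ) ^ 1 * ((p:ℝ)⁻¹) ^ n) := by
      apply summable_pow_mul_geometric_of_norm_lt_one
      rw [norm_inv, Real.norm_natCast, inv_lt_one_iff₀]
      right; exact hp1
    have hs2 := hs.comp_injective (add_left_injective 1)
    apply hs2.congr
    intro n
    simp only [Function.comp]
    push_cast
    ring
  · intro n
    have hpt : ((p : ℚ_[p]) * (t : ℚ_[p])) = (((p * t : ℤ)) : ℚ_[p]) := by push_cast; ring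
    set v : ℕ := padicValNat p (n + 1) with hv
    have hnorm_pt : ‖((p * t : ℤ) : ℚ_[p])‖ ≤ (p : ℝ)⁻¹ := by
      have h0 : ‖((p * t : ℤ) : ℚ_[p])‖ ≤ (p : ℝ) ^ (-(1:ℕ) : ℤ) :=
        (Padic.norm_int_le_pow_iff_dvd _ _).2 (by simpa using Dvd.intro t rfl)
      simpa using h0
    have hn1 : ((n : ℚ_[p]) + 1) = (((n + 1 : ℕ)) : ℚ_[p]) := by push_cast; ring
    have hnorm_n1 : ‖((n : ℚ_[p]) + 1)‖ = (p : ℝ) ^ (-(v : ℤ)) := by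
      rw [hn1, norm_natCast_eq p _ (Nat.succ_ne_zero n)]
    have h1 : ‖logSeries p t n‖ =
        ‖((p : ℚ_[p]) * (t : ℚ_[p])) ^ (n + 1)‖ / (p : ℝ) ^ (-(v : ℤ)) := by
      rw [logSeries, norm_div, norm_mul, norm_pow, norm_neg, norm_one, one_pow, one_mul, hnorm_n1]
    rw [h1, hpt, norm_pow]
    have hvb : (p:ℝ) ^ (v:ℤ) ≤ (n:ℝ) + 1 := by
      have h6 : (p ^ v : ℕ) ≤ n + 1 := Nat.le_of_dvd (Nat.succ_pos n) pow_padicValNat_dvd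
      have h7 := (Nat.cast_le (α := ℝ)).2 h6
      push_cast at h7
      rw [zpow_natCast]
      convert h7 using 2
    have hppos : (0 : ℝ) < (p : ℝ) ^ (-(v : ℤ)) := zpow_pos (by positivity) _
    rw [div_le_iff₀ hppos]
    have hb : ‖((p * t : ℤ) : ℚ_[p])‖ ^ (n + 1) ≤ ((p : ℝ)⁻¹) ^ (n + 1) :=
      pow_le_pow_left₀ (norm_nonneg _) hnorm_pt _
    calc ‖((p * t : ℤ) : ℚ_[p])‖ ^ (n + 1) ≤ ((p : ℝ)⁻¹) ^ (n + 1) := hb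
      _ = (((n:ℝ) + 1) * ((p : ℝ)⁻¹) ^ (n + 1)) * (((n:ℝ)+1))⁻¹ := by
          field_simp
      _ ≤ (((n:ℝ) + 1) * ((p : ℝ)⁻¹) ^ (n + 1)) * (p : ℝ) ^ (-(v : ℤ)) := by
          apply mul_le_mul_of_nonneg_left _ (by positivity)
          rw [zpow_neg]
          exact inv_anti₀ (by positivity) hvb

/-- The tsum of the log series, as a p-adic integer. -/
noncomputable def logInt (t : ℤ) : ℤ_[p] :=
  ⟨∑' n : ℕ, logSeries p t n, by
    have h1 : ‖∑' n : ℕ, logSeries p t n‖ ≤ (p : ℝ) ^ (-(1:ℕ) : ℤ) := by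
      apply IsUltrametricDist.norm_tsum_le_of_forall_le_of_nonneg (by positivity)
      intro n
      apply norm_term_le p t 1 (by simpa using Dvd.intro t rfl) n 1
      have := padicValNat_succ_le p 1 n le_rfl
      omega
    have h2 : (p:ℝ) ^ (-(1:ℕ):ℤ) ≤ 1 :=
      zpow_le_one_of_nonpos₀ (by exact_mod_cast hp.out.one_le) (by norm_num)
    exact le_trans h1 h2⟩

lemma coe_logInt (t : ℤ) :
    (logInt p t : ℚ_[p]) =
      ∑' n : ℕ, (-1 : ℚ_[p]) ^ n * ((p : ℚ_[p]) * (t : ℚ_[p])) ^ (n + 1) / (n + 1) := rfl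

lemma norm_logInt_le (t : ℤ) (m : ℕ) (hm : 1 ≤ m) (ht : (p : ℤ) ^ m ∣ p * t) :
    ‖logInt p t‖ ≤ (p : ℝ) ^ (-(m : ℤ)) := by
  rw [PadicInt.norm_def]
  apply IsUltrametricDist.norm_tsum_le_of_forall_le_of_nonneg (by positivity)
  intro n
  apply norm_term_le p t m ht n m
  have h1 := padicValNat_succ_le p m n hm
  nlinarith

lemma norm_logInt_eq (α : ℕ) (hα : 1 ≤ α) (h3 : 3 ≤ p) :
    ‖logInt p ((p:ℤ) ^ (α - 1))‖ = (p : ℝ) ^ (-(α : ℤ)) := by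
  have hp1 : (1 : ℝ) < p := by exact_mod_cast hp.out.one_lt
  set t : ℤ := (p:ℤ) ^ (α - 1) with htdef
  have hpt : (p : ℤ) * t = (p:ℤ) ^ α := by
    rw [htdef, ← pow_succ']
    congr 1
    omega
  have hdvd : (p : ℤ) ^ α ∣ p * t := by rw [hpt]
  have hhead : ‖logSeries p t 0‖ = (p:ℝ) ^ (-(α:ℤ)) := by
    have ht0 : logSeries p t 0 = ((p:ℚ_[p]) * (t:ℚ_[p])) := by
      simp [logSeries]
    rw [ht0]
    have hc : ((p : ℚ_[p]) * (t : ℚ_[p])) = (((p * t : ℤ)) : ℚ_[p]) := by push_cast; ring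
    rw [hc, hpt]
    push_cast
    rw [norm_pow, Padic.norm_p, inv_pow, ← zpow_natCast, ← zpow_neg]
  have htail : ‖∑' n : ℕ, logSeries p t (n + 1)‖ ≤ (p:ℝ) ^ (-(α:ℤ) - 1) := by
    have he : (-(α:ℤ) - 1) = (-((α + 1 : ℕ) : ℤ)) := by push_cast; ring
    rw [he]
    apply IsUltrametricDist.norm_tsum_le_of_forall_le_of_nonneg (by positivity)
    intro n
    apply norm_term_le p t α hdvd (n + 1) (α + 1)
    have h5 := padicValNat_succ_lt p α (n + 1) hα (by omega) h3
    nlinarith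
  have hsum : (logInt p t : ℚ_[p]) = logSeries p t 0 + ∑' n : ℕ, logSeries p t (n + 1) := by
    rw [coe_logInt]
    exact Summable.tsum_eq_zero_add (summable_logSeries p t)
  rw [PadicInt.norm_def, hsum]
  have hlt : ‖∑' n : ℕ, logSeries p t (n + 1)‖ < ‖logSeries p t 0‖ := by
    rw [hhead]
    calc ‖∑' n : ℕ, logSeries p t (n + 1)‖ ≤ (p:ℝ) ^ (-(α:ℤ) - 1) := htail
      _ < (p:ℝ) ^ (-(α:ℤ)) := by
          apply zpow_lt_zpow_right₀ hp1
          omega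
  rw [IsUltrametricDist.norm_add_eq_max_of_norm_ne_norm hlt.ne']
  rw [max_eq_left (le_of_lt hlt), hhead]

lemma toZModPow_mul_eq (β : ℕ) (a b : ℕ) (c : ℤ) (hc : (a : ℤ) - (b : ℤ) = c) (y : ℤ_[p])
    (h : ‖(c : ℤ_[p]) * y‖ ≤ (p:ℝ) ^ (-(β:ℤ))) :
    PadicInt.toZModPow β ((a : ℤ_[p]) * y) = PadicInt.toZModPow β ((b : ℤ_[p]) * y) := by
  rw [← RingHom.sub_mem_ker_iff, PadicInt.ker_toZModPow]
  have he : (a : ℤ_[p]) * y - (b : ℤ_[p]) * y = (c : ℤ_[p]) * y := by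
    rw [← hc]; push_cast; ring
  rw [he, ← PadicInt.norm_le_pow_iff_mem_span_pow]
  exact h

lemma exp_mul_conj (M₁ M₂ : ℕ) (d : ℂ) (hd : (starRingEnd ℂ) d = d) :
    Complex.exp (2 * Real.pi * Complex.I * (M₁:ℂ) / d) *
      (starRingEnd ℂ) (Complex.exp (2 * Real.pi * Complex.I * (M₂:ℂ) / d)) =
    Complex.exp (2 * Real.pi * Complex.I * ((M₁:ℂ) - (M₂:ℂ)) / d) := by
  rw [← Complex.exp_conj, ← Complex.exp_add]
  congr 1
  rw [map_div₀, hd]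
  simp only [map_mul, Complex.conj_I, map_ofNat, Complex.conj_ofReal, Complex.conj_natCast]
  ring

end PostnikovAux


namespace PostnikovAux

lemma postnikov_eval (p : ℕ) [Fact p.Prime] (β : ℕ) (χ : DirichletCharacter ℂ (p ^ β))
    (ℓ : ZMod (p ^ (β - 1))) (h : PostnikovParam p β χ ℓ) (t : ℤ) :
    χ ((1 + p * t : ℤ) : ZMod (p ^ β)) =
      Complex.exp (2 * Real.pi * Complex.I *
        ((PadicInt.toZModPow β ((ℓ.val : ℤ_[p]) * logInt p t)).val : ℂ) / ((p : ℂ) ^ β)) :=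
  h t (logInt p t) (coe_logInt p t)

end PostnikovAux


open PostnikovAux in
/-- For `p` odd, `β ≥ 2`, `1 ≤ α ≤ β`: the Postnikov parameters of `χ₁, χ₂` agree
modulo `p^{β-α}` iff `χ₁ ⋅ conj(χ₂)` is induced by a character modulo `p^α`. -/
theorem stmt_7 (p : ℕ) [Fact p.Prime] (hodd : Odd p) (β α : ℕ)
    (hβ : 2 ≤ β) (hα : 1 ≤ α) (hαβ : α ≤ β)
    (χ₁ χ₂ : DirichletCharacter ℂ (p ^ β)) (ℓ₁ ℓ₂ : ZMod (p ^ (β - 1)))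
    (h₁ : PostnikovParam p β χ₁ ℓ₁) (h₂ : PostnikovParam p β χ₂ ℓ₂) :
    ZMod.castHom (pow_dvd_pow p (by omega : β - α ≤ β - 1)) (ZMod (p ^ (β - α))) ℓ₁
      = ZMod.castHom (pow_dvd_pow p (by omega : β - α ≤ β - 1)) (ZMod (p ^ (β - α))) ℓ₂
    ↔ ∃ χ₀ : DirichletCharacter ℂ (p ^ α),
        ∀ x : ZMod (p ^ β),
          χ₁ x * (starRingEnd ℂ) (χ₂ x)
            = χ₀ (ZMod.castHom (pow_dvd_pow p hαβ) (ZMod (p ^ α)) x) := by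
  have hprime : p.Prime := Fact.out
  have h3 : 3 ≤ p := by
    have h2 := hprime.two_le
    have ho := Nat.odd_iff.mp hodd
    omega
  haveI nzβ : NeZero (p ^ β) := ⟨pow_ne_zero _ hprime.ne_zero⟩
  haveI nzα : NeZero (p ^ α) := ⟨pow_ne_zero _ hprime.ne_zero⟩
  haveI nzβα : NeZero (p ^ (β - α)) := ⟨pow_ne_zero _ hprime.ne_zero⟩
  haveI nzβ1 : NeZero (p ^ (β - 1)) := ⟨pow_ne_zero _ hprime.ne_zero⟩
  have hdvd : (p : ℕ) ^ α ∣ p ^ β := pow_dvd_pow p hαβ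
  have hpR0 : (p : ℝ) ≠ 0 := by exact_mod_cast hprime.ne_zero
  have hconjd : (starRingEnd ℂ) ((p : ℂ) ^ β) = (p : ℂ) ^ β := by simp
  -- make the values opaque
  obtain ⟨a₁, ha₁⟩ : ∃ a : ℕ, ℓ₁.val = a := ⟨_, rfl⟩
  obtain ⟨a₂, ha₂⟩ : ∃ a : ℕ, ℓ₂.val = a := ⟨_, rfl⟩
  obtain ⟨c, hc⟩ : ∃ c : ℤ, (a₁ : ℤ) - (a₂ : ℤ) = c := ⟨_, rfl⟩
  have he₁ := postnikov_eval p β χ₁ ℓ₁ h₁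
  have he₂ := postnikov_eval p β χ₂ ℓ₂ h₂
  simp only [ha₁] at he₁
  simp only [ha₂] at he₂
  -- reformulate LHS as integer divisibility
  have hLHS : (ZMod.castHom (pow_dvd_pow p (by omega : β - α ≤ β - 1)) (ZMod (p ^ (β - α))) ℓ₁
      = ZMod.castHom (pow_dvd_pow p (by omega : β - α ≤ β - 1)) (ZMod (p ^ (β - α))) ℓ₂)
      ↔ ((p : ℤ) ^ (β - α) ∣ c) := by
    rw [ZMod.castHom_apply, ZMod.castHom_apply, ← ZMod.natCast_val, ← ZMod.natCast_val,
      ha₁, ha₂, ZMod.natCast_eq_natCast_iff, Nat.modEq_iff_dvd, dvd_sub_comm, ← hc]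
    push_cast
    rfl
  -- key norm computation producing equality of exponents
  have hMeq : ∀ t : ℤ, (p : ℤ) ^ α ∣ p * t → (p : ℤ) ^ (β - α) ∣ c →
      PadicInt.toZModPow β ((a₁ : ℤ_[p]) * logInt p t)
        = PadicInt.toZModPow β ((a₂ : ℤ_[p]) * logInt p t) := by
    intro t ht hdv
    refine toZModPow_mul_eq p β a₁ a₂ c hc (logInt p t) ?_
    have hy : ‖logInt p t‖ ≤ (p : ℝ) ^ (-(α : ℤ)) := norm_logInt_le p t α hα ht
    have hcn : ‖((c : ℤ) : ℤ_[p])‖ ≤ (p : ℝ) ^ (-((β - α : ℕ) : ℤ)) :=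
      PadicInt.norm_int_le_pow_iff_dvd.2 hdv
    calc ‖((c : ℤ) : ℤ_[p]) * logInt p t‖
        = ‖((c : ℤ) : ℤ_[p])‖ * ‖logInt p t‖ := norm_mul _ _
      _ ≤ (p : ℝ) ^ (-((β - α : ℕ) : ℤ)) * (p : ℝ) ^ (-(α : ℤ)) :=
          mul_le_mul hcn hy (norm_nonneg _) (by positivity)
      _ = (p : ℝ) ^ (-(β : ℤ)) := by
          rw [← zpow_add₀ hpR0]
          congr 1
          omega
  constructor
  · -- forward direction
    intro hcong
    have hdv := hLHS.1 hcong
    set ψ : DirichletCharacter ℂ (p ^ β) := χ₁ * (χ₂.ringHomComp (starRingEnd ℂ)) with hψdef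
    have hψ_apply : ∀ x : ZMod (p ^ β), ψ x = χ₁ x * (starRingEnd ℂ) (χ₂ x) := by
      intro x
      rw [hψdef, MulChar.mul_apply, MulChar.ringHomComp_apply]
    have hFT : ψ.FactorsThrough (p ^ α) := by
      rw [DirichletCharacter.factorsThrough_iff_ker_unitsMap hdvd]
      intro u hu
      rw [MonoidHom.mem_ker] at hu
      obtain ⟨w, hw⟩ : ∃ w : ℕ, (u : ZMod (p ^ β)).val = w := ⟨_, rfl⟩
      have hx : ((w : ℕ) : ZMod (p ^ α)) = 1 := by
        have h5 : ((ZMod.unitsMap hdvd u : (ZMod (p ^ α))ˣ) : ZMod (p ^ α))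
            = ((1 : (ZMod (p ^ α))ˣ) : ZMod (p ^ α)) := by rw [hu]
        rw [ZMod.unitsMap_def] at h5
        simp only [Units.coe_map, MonoidHom.coe_coe, ZMod.castHom_apply, Units.val_one] at h5
        rw [← ZMod.natCast_val, hw] at h5
        exact h5
      have hmod : (p : ℤ) ^ α ∣ (w : ℤ) - 1 := by
        have h6 : w ≡ 1 [MOD p ^ α] := by
          rw [← ZMod.natCast_eq_natCast_iff]
          simpa using hx
        have h7 := (Nat.modEq_iff_dvd).1 h6
        rw [dvd_sub_comm] at h7
        push_cast at h7 ⊢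
        simpa using h7
      obtain ⟨s, hs⟩ := hmod
      set t : ℤ := (p : ℤ) ^ (α - 1) * s with htdef
      have hpt : (p : ℤ) * t = (p : ℤ) ^ α * s := by
        rw [htdef, ← mul_assoc, ← pow_succ']
        congr 2
        omega
      have hxeq : ((1 + p * t : ℤ) : ZMod (p ^ β)) = (u : ZMod (p ^ β)) := by
        have h8 : (1 + p * t : ℤ) = ((w : ℕ) : ℤ) := by
          rw [hpt, ← hs]; ring
        rw [h8, Int.cast_natCast, ← hw, ZMod.natCast_val, ZMod.cast_id]
      have hψu : ψ ((u : ZMod (p ^ β))) = 1 := by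
        rw [hψ_apply, ← hxeq, he₁ t, he₂ t, hMeq t ⟨s, hpt⟩ hdv,
          exp_mul_conj _ _ _ hconjd]
        simp
      rw [MonoidHom.mem_ker]
      ext
      rw [MulChar.coe_toUnitHom]
      simpa using hψu
    obtain ⟨hd', χ₀, hχ₀⟩ := hFT
    refine ⟨χ₀, fun x => ?_⟩
    rw [← hψ_apply x, hχ₀]
    by_cases hu : IsUnit x
    · obtain ⟨u, rfl⟩ := hu
      rw [DirichletCharacter.changeLevel_eq_cast_of_dvd]
      congr 1
    · rw [MulChar.map_nonunit _ hu, MulChar.map_nonunit]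
      obtain ⟨w, hw⟩ : ∃ w : ℕ, x.val = w := ⟨_, rfl⟩
      have hxw : x = ((w : ℕ) : ZMod (p ^ β)) := by
        rw [← hw, ZMod.natCast_val, ZMod.cast_id]
      have hcast : ZMod.castHom (pow_dvd_pow p hαβ) (ZMod (p ^ α)) x
          = ((w : ℕ) : ZMod (p ^ α)) := by
        conv_lhs => rw [hxw]
        rw [map_natCast]
      rw [hcast, ZMod.isUnit_iff_coprime, Nat.coprime_pow_right_iff (by omega)]
      intro hcop
      apply hu
      rw [hxw, ZMod.isUnit_iff_coprime, Nat.coprime_pow_right_iff (by omega : 0 < β)]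
      exact hcop
  · -- backward direction
    rintro ⟨χ₀, hχ₀⟩
    set t : ℤ := (p : ℤ) ^ (α - 1) with htdef
    have hpt : (p : ℤ) * t = (p : ℤ) ^ α := by
      rw [htdef, ← pow_succ']
      congr 1
      omega
    have hkey := hχ₀ ((1 + p * t : ℤ) : ZMod (p ^ β))
    have hx1 : ZMod.castHom (pow_dvd_pow p hαβ) (ZMod (p ^ α)) ((1 + p * t : ℤ) : ZMod (p ^ β))
        = 1 := by
      rw [map_intCast]
      have h9 : (1 + p * t : ℤ) = ((1 + p ^ α : ℕ) : ℤ) := by rw [hpt]; push_cast; ring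
      rw [h9, Int.cast_natCast, Nat.cast_add, Nat.cast_one, ZMod.natCast_self, add_zero]
    rw [hx1, map_one, he₁ t, he₂ t, exp_mul_conj _ _ _ hconjd,
      Complex.exp_eq_one_iff] at hkey
    obtain ⟨n, hn⟩ := hkey
    obtain ⟨M₁, hM₁⟩ : ∃ M : ℕ, (PadicInt.toZModPow β ((a₁ : ℤ_[p]) * logInt p t)).val = M :=
      ⟨_, rfl⟩
    obtain ⟨M₂, hM₂⟩ : ∃ M : ℕ, (PadicInt.toZModPow β ((a₂ : ℤ_[p]) * logInt p t)).val = M :=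
      ⟨_, rfl⟩
    rw [hM₁, hM₂] at hn
    have hd0 : ((p : ℂ) ^ β) ≠ 0 := pow_ne_zero _ (by exact_mod_cast hprime.ne_zero)
    have h2pi : (2 * (Real.pi : ℂ) * Complex.I) ≠ 0 := by
      simp [Real.pi_ne_zero, Complex.I_ne_zero, Complex.ofReal_ne_zero]
    have hM : ((M₁ : ℂ) - (M₂ : ℂ)) = (n : ℂ) * (p : ℂ) ^ β := by
      rw [div_eq_iff hd0] at hn
      apply mul_left_cancel₀ h2pi
      linear_combination hn
    have hMint : (M₁ : ℤ) - (M₂ : ℤ) = n * (p : ℤ) ^ β := by exact_mod_cast hM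
    have hMzmod : PadicInt.toZModPow β ((a₁ : ℤ_[p]) * logInt p t)
        = PadicInt.toZModPow β ((a₂ : ℤ_[p]) * logInt p t) := by
      have h10 : ((M₁ : ℤ) : ZMod (p ^ β)) = ((M₂ : ℤ) : ZMod (p ^ β)) := by
        rw [ZMod.intCast_eq_intCast_iff]
        apply Int.ModEq.symm
        rw [Int.modEq_iff_dvd]
        exact ⟨n, by push_cast; linarith [hMint]⟩
      have h11 : ((M₁ : ℕ) : ZMod (p ^ β)) = ((M₂ : ℕ) : ZMod (p ^ β)) := by exact_mod_cast h10
      rw [← hM₁, ← hM₂] at h11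
      rwa [ZMod.natCast_val, ZMod.natCast_val, ZMod.cast_id, ZMod.cast_id] at h11
    -- from equality mod p^β, deduce divisibility
    have hker : ‖((c : ℤ) : ℤ_[p]) * logInt p t‖
        ≤ (p : ℝ) ^ (-(β : ℤ)) := by
      have hmem := (RingHom.sub_mem_ker_iff (f := PadicInt.toZModPow (p := p) β)).2 hMzmod
      rw [PadicInt.ker_toZModPow] at hmem
      have he : (a₁ : ℤ_[p]) * logInt p t - (a₂ : ℤ_[p]) * logInt p t
          = ((c : ℤ) : ℤ_[p]) * logInt p t := by
        rw [← hc]; push_cast; ring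
      rw [he] at hmem
      rwa [PadicInt.norm_le_pow_iff_mem_span_pow]
    have hy : ‖logInt p t‖ = (p : ℝ) ^ (-(α : ℤ)) := norm_logInt_eq p α hα h3
    have hnorm : ‖((c : ℤ) : ℤ_[p])‖
        ≤ (p : ℝ) ^ (-((β - α : ℕ) : ℤ)) := by
      have h12 : ‖((c : ℤ) : ℤ_[p])‖ * (p : ℝ) ^ (-(α : ℤ))
          ≤ (p : ℝ) ^ (-(β : ℤ)) := by
        rw [← hy, ← norm_mul]
        exact hker
      have h13 : (0 : ℝ) < (p : ℝ) ^ (-(α : ℤ)) := zpow_pos (by positivity) _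
      rw [← le_div_iff₀ h13] at h12
      calc ‖((c : ℤ) : ℤ_[p])‖
          ≤ (p : ℝ) ^ (-(β : ℤ)) / (p : ℝ) ^ (-(α : ℤ)) := h12
        _ = (p : ℝ) ^ (-((β - α : ℕ) : ℤ)) := by
            rw [← zpow_sub₀ hpR0]
            congr 1
            omega
    exact hLHS.2 (PadicInt.norm_int_le_pow_iff_dvd.1 hnorm)
end

section
/- Let χ be a Dirichlet character modulo q induced by the primitive character χ′ modulo q′ (allowing q′ = 1, the trivial character). Then for every integer n ≥ 1, the Gauss sum τ(χ, n) = Σ_{x mod q} χ(x) e_q(n x) satisfies |τ(χ, n)| ≤ (q′)^{1/2} · gcd(n, q/q′). -/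
open Complex Finset

lemma aux_conj_stdAddChar {N : ℕ} [NeZero N] (t : ZMod N) :
    (starRingEnd ℂ) (ZMod.stdAddChar t) = ZMod.stdAddChar (-t) := by
  have h1 : t = ((t.val : ℤ) : ZMod N) := by
    push_cast
    rw [ZMod.natCast_val, ZMod.cast_id]
  rw [h1, ← Int.cast_neg, ZMod.stdAddChar_coe, ZMod.stdAddChar_coe, ← Complex.exp_conj]
  congr 1
  simp only [map_div₀, map_mul, Complex.conj_I, Complex.conj_ofReal, map_ofNat,
    map_intCast, map_natCast]
  push_cast
  ring

lemma aux_abs_gaussSum (N : ℕ) [NeZero N] (χ : DirichletCharacter ℂ N)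
    (hχ : χ.IsPrimitive) :
    ‖gaussSum χ ZMod.stdAddChar‖ = Real.sqrt N := by
  set ψ : AddChar (ZMod N) ℂ := ZMod.stdAddChar with hψdef
  set τ := gaussSum χ ψ with hτ
  have hprim : ψ.IsPrimitive := ZMod.isPrimitive_stdAddChar N
  -- value of any Dirichlet character sum of |·|²
  have hsq : ∀ (χ₀ : DirichletCharacter ℂ N) (x : ZMod N),
      χ₀ x * (starRingEnd ℂ) (χ₀ x) = if IsUnit x then 1 else 0 := by
    intro χ₀ x
    by_cases hx : IsUnit x
    · rw [Complex.mul_conj, if_pos hx]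
      have := χ₀.unit_norm_eq_one hx.unit
      rw [hx.unit_spec] at this
      rw [Complex.normSq_eq_norm_sq, this]
      norm_num
    · rw [χ₀.map_nonunit hx, if_neg hx, zero_mul]
  set c : ℕ := (Finset.univ.filter (fun x : ZMod N => IsUnit x)).card with hc
  have hsum : ∀ (χ₀ : DirichletCharacter ℂ N),
      ∑ x : ZMod N, χ₀ x * (starRingEnd ℂ) (χ₀ x) = (c : ℂ) := by
    intro χ₀
    rw [hc, Finset.sum_congr rfl fun x _ => hsq χ₀ x, Finset.sum_boole]
  have hcne : (c : ℂ) ≠ 0 := by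
    have : (1 : ZMod N) ∈ Finset.univ.filter (fun x : ZMod N => IsUnit x) := by
      simp [isUnit_one]
    have hpos : 0 < c := Finset.card_pos.mpr ⟨1, this⟩
    exact_mod_cast hpos.ne'
  -- the double sum, computed two ways
  have key : ∀ m : ZMod N, gaussSum χ (ψ.mulShift m) = χ⁻¹ m * τ := fun m =>
    gaussSum_mulShift_of_isPrimitive ψ hχ m
  have way1 : ∑ m : ZMod N, gaussSum χ (ψ.mulShift m) *
      (starRingEnd ℂ) (gaussSum χ (ψ.mulShift m)) = (c : ℂ) * (τ * (starRingEnd ℂ) τ) := by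
    have e1 : ∀ m : ZMod N, gaussSum χ (ψ.mulShift m) *
        (starRingEnd ℂ) (gaussSum χ (ψ.mulShift m)) =
        (χ⁻¹ m * (starRingEnd ℂ) (χ⁻¹ m)) * (τ * (starRingEnd ℂ) τ) := by
      intro m; rw [key m, map_mul]; ring
    rw [Finset.sum_congr rfl fun m _ => e1 m, ← Finset.sum_mul, hsum χ⁻¹]
  have way2 : ∑ m : ZMod N, gaussSum χ (ψ.mulShift m) *
      (starRingEnd ℂ) (gaussSum χ (ψ.mulShift m)) = (N : ℂ) * (c : ℂ) := by
    have expand : ∀ m : ZMod N, gaussSum χ (ψ.mulShift m) *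
        (starRingEnd ℂ) (gaussSum χ (ψ.mulShift m)) =
        ∑ x : ZMod N, ∑ y : ZMod N,
          χ x * (starRingEnd ℂ) (χ y) * ψ (m * (x - y)) := by
      intro m
      rw [gaussSum, map_sum, Finset.sum_mul_sum]
      refine Finset.sum_congr rfl fun x _ => Finset.sum_congr rfl fun y _ => ?_
      simp only [AddChar.mulShift_apply, map_mul]
      rw [aux_conj_stdAddChar, ← hψdef]
      conv_rhs => rw [mul_sub, sub_eq_add_neg, AddChar.map_add_eq_mul]
      ring
    simp_rw [expand]
    rw [Finset.sum_comm]
    have swap2 : ∀ x : ZMod N, ∑ m : ZMod N, ∑ y : ZMod N,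
        χ x * (starRingEnd ℂ) (χ y) * ψ (m * (x - y)) =
        ∑ y : ZMod N, χ x * (starRingEnd ℂ) (χ y) * ∑ m : ZMod N, ψ (m * (x - y)) := by
      intro x
      rw [Finset.sum_comm]
      exact Finset.sum_congr rfl fun y _ => by rw [Finset.mul_sum]
    simp_rw [swap2, AddChar.sum_mulShift _ hprim]
    have : ∀ x : ZMod N, ∑ y : ZMod N, χ x * (starRingEnd ℂ) (χ y) *
        (if x - y = 0 then (Fintype.card (ZMod N) : ℂ) else 0) =
        χ x * (starRingEnd ℂ) (χ x) * (N : ℂ) := by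
      intro x
      rw [Finset.sum_eq_single x]
      · simp [ZMod.card N]
      · intro y _ hy
        rw [if_neg (sub_ne_zero.mpr (Ne.symm hy)), mul_zero]
      · intro h; exact absurd (Finset.mem_univ x) h
    simp only [Nat.cast_ite, Nat.cast_zero]
    rw [Finset.sum_congr rfl fun x _ => this x]
    rw [← Finset.sum_mul, hsum χ]
    ring
  have hττ : τ * (starRingEnd ℂ) τ = (N : ℂ) := by
    have h2 : (c : ℂ) * (τ * (starRingEnd ℂ) τ) = (c : ℂ) * (N : ℂ) := by
      rw [← way1, way2]; ring
    exact mul_left_cancel₀ hcne h2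
  have : (Complex.normSq τ : ℂ) = (N : ℂ) := by rw [← Complex.mul_conj, hττ]
  have hnsq : Complex.normSq τ = (N : ℝ) := by exact_mod_cast this
  rw [Complex.norm_def, hnsq]


/-- Bound for the Gauss sum of a (possibly imprimitive) Dirichlet character:
if `χ` mod `q` is induced by the primitive character `χ′` mod `q′`, then
`|τ(χ,n)| ≤ √(q′) · gcd(n, q/q′)`. -/
theorem stmt_10 (q q' : ℕ) [NeZero q] (hdvd : q' ∣ q)
    (χ' : DirichletCharacter ℂ q') (hprim : χ'.IsPrimitive)
    (χ : DirichletCharacter ℂ q) (hind : χ = DirichletCharacter.changeLevel hdvd χ')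
    (n : ℕ) (hn : 1 ≤ n) :
    ‖∑ x : ZMod q,
        χ x * Complex.exp (2 * Real.pi * Complex.I * (n : ℂ) * ((x.val : ℕ) : ℂ) / (q : ℂ))‖
      ≤ Real.sqrt q' * (Nat.gcd n (q / q')) := by
  subst hind
  have hq0 : q ≠ 0 := NeZero.ne q
  have hq'0 : q' ≠ 0 := by rintro rfl; exact hq0 (zero_dvd_iff.mp hdvd)
  haveI : NeZero q' := ⟨hq'0⟩
  set r := q / q' with hrdef
  have hqr : q = q' * r := (Nat.mul_div_cancel' hdvd).symm
  have hr0 : r ≠ 0 := by rintro h; rw [h, mul_zero] at hqr; exact hq0 hqr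
  set g := Nat.gcd n r with hgdef
  have hgr : g ∣ r := Nat.gcd_dvd_right n r
  have hgn : g ∣ n := Nat.gcd_dvd_left n r
  have hg0 : g ≠ 0 := fun h0 => hr0 (Nat.eq_zero_of_gcd_eq_zero_right h0)
  set h := r / g with hhdef
  have hrgh : r = g * h := (Nat.mul_div_cancel' hgr).symm
  have hh0 : h ≠ 0 := by rintro h0; rw [h0, mul_zero] at hrgh; exact hr0 hrgh
  set n₁ := n / g with hn1def
  have hn1 : n = g * n₁ := (Nat.mul_div_cancel' hgn).symm
  have hcop : Nat.Coprime n₁ h := Nat.coprime_div_gcd_div_gcd (Nat.pos_of_ne_zero hg0)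
  set m := q' * h with hmdef
  have hm0 : m ≠ 0 := mul_ne_zero hq'0 hh0
  haveI : NeZero m := ⟨hm0⟩
  have hq'm : q' ∣ m := ⟨h, rfl⟩
  have hqgm : q = g * m := by rw [hqr, hrgh, hmdef]; ring
  have hmq : m ∣ q := ⟨g, by rw [hqgm]; ring⟩
  have hhm : h ∣ m := ⟨q', mul_comm q' h⟩
  set π : ZMod q →+* ZMod m := ZMod.castHom hmq (ZMod m) with hπdef
  set π' : ZMod m →+* ZMod q' := ZMod.castHom hq'm (ZMod q') with hπ'def
  set χm : DirichletCharacter ℂ m := DirichletCharacter.changeLevel hq'm χ' with hχm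
  set ψm : AddChar (ZMod m) ℂ := ZMod.stdAddChar with hψm
  set ψ' : AddChar (ZMod q') ℂ := ZMod.stdAddChar with hψ'
  set K : ℕ := (Finset.univ.filter (fun x : ZMod q => π x = 1 ∧ IsUnit x)).card with hK
  set τm : ℂ := ∑ y : ZMod m, χm y * ψm ((n₁ : ZMod m) * y) with hτm
  -- Step 0: glue
  have glue : ∑ x : ZMod q, (DirichletCharacter.changeLevel hdvd χ') x *
      Complex.exp (2 * Real.pi * Complex.I * (n : ℂ) * ((x.val : ℕ) : ℂ) / (q : ℂ))
      = ∑ x : ZMod q, (DirichletCharacter.changeLevel hdvd χ') x * ψm ((n₁ : ZMod m) * π x) := by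
    refine Finset.sum_congr rfl fun x _ => ?_
    congr 1
    have h1 : (n₁ : ZMod m) * π x = (((n₁ * x.val : ℕ) : ℤ) : ZMod m) := by
      rw [hπdef, ZMod.castHom_apply, ← ZMod.natCast_val x]
      push_cast
      ring
    rw [hψm, h1, ZMod.stdAddChar_coe]
    have hq : (q : ℂ) = (g : ℂ) * m := by exact_mod_cast congrArg (Nat.cast (R := ℂ)) hqgm
    have hn' : (n : ℂ) = (g : ℂ) * n₁ := by exact_mod_cast congrArg (Nat.cast (R := ℂ)) hn1
    have hgc : (g : ℂ) ≠ 0 := Nat.cast_ne_zero.mpr hg0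
    have hmc : (m : ℂ) ≠ 0 := Nat.cast_ne_zero.mpr hm0
    rw [hq, hn']
    push_cast
    congr 1
    field_simp
  -- Step A
  have fibchi : ∀ y : ZMod m, (∑ x ∈ Finset.univ.filter (fun x : ZMod q => π x = y),
      (DirichletCharacter.changeLevel hdvd χ') x) = (K : ℂ) * χm y := by
    intro y
    by_cases hy : IsUnit y
    · -- unit case
      obtain ⟨u₀, hu₀⟩ := ZMod.unitsMap_surjective hmq hy.unit
      have hπu₀ : π (↑u₀) = y := by
        have h2 := congrArg (Units.val) hu₀
        rw [ZMod.unitsMap_def, Units.coe_map, IsUnit.unit_spec] at h2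
        exact h2
      -- restrict to units
      have hrestrict : ∑ x ∈ Finset.univ.filter (fun x : ZMod q => π x = y),
          (DirichletCharacter.changeLevel hdvd χ') x
          = ∑ x ∈ Finset.univ.filter (fun x : ZMod q => π x = y ∧ IsUnit x),
          (DirichletCharacter.changeLevel hdvd χ') x := by
        symm
        apply Finset.sum_subset
        · intro x hx
          simp only [Finset.mem_filter, Finset.mem_univ, true_and] at hx ⊢
          exact hx.1
        · intro x hx hx'
          simp only [Finset.mem_filter, Finset.mem_univ, true_and] at hx hx'
          exact (DirichletCharacter.changeLevel hdvd χ').map_nonunit (fun hu => hx' ⟨hx, hu⟩)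
      -- each unit term equals χ' (cast y)
      have hval : ∀ x : ZMod q, π x = y → IsUnit x →
          (DirichletCharacter.changeLevel hdvd χ') x = χ' (ZMod.cast y) := by
        intro x hx hxu
        have h3 : (DirichletCharacter.changeLevel hdvd χ') ↑hxu.unit
            = χ' (ZMod.cast (↑hxu.unit : ZMod q)) :=
          DirichletCharacter.changeLevel_eq_cast_of_dvd χ' hdvd hxu.unit
        rw [IsUnit.unit_spec] at h3
        rw [h3]
        congr 1
        have h4 : (ZMod.castHom (dvd_trans hq'm hmq) (ZMod q')) x
            = (ZMod.castHom hq'm (ZMod q')) (π x) := by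
          rw [← ZMod.castHom_comp hq'm hmq]; rfl
        rw [ZMod.castHom_apply, ZMod.castHom_apply] at h4
        rw [h4, hx]
      have key_inv : π ↑(u₀⁻¹) = ↑(hy.unit⁻¹) := by
        have h5 : (ZMod.unitsMap hmq) (u₀⁻¹) = hy.unit⁻¹ := by rw [map_inv, hu₀]
        have h6 := congrArg Units.val h5
        rwa [ZMod.unitsMap_def, Units.coe_map] at h6
      have hcard : (Finset.univ.filter (fun x : ZMod q => π x = y ∧ IsUnit x)).card = K := by
        rw [hK]
        refine Finset.card_bij' (fun x _ => x * ((u₀⁻¹ : (ZMod q)ˣ) : ZMod q))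
          (fun x _ => x * ((u₀ : (ZMod q)ˣ) : ZMod q)) ?_ ?_ ?_ ?_
        · intro a ha
          simp only [Finset.mem_filter, Finset.mem_univ, true_and] at ha ⊢
          refine ⟨?_, ha.2.mul (u₀⁻¹).isUnit⟩
          rw [map_mul, ha.1, key_inv]
          have h7 : (↑hy.unit : ZMod m) * ↑(hy.unit⁻¹) = 1 := hy.unit.mul_inv
          rwa [IsUnit.unit_spec] at h7
        · intro a ha
          simp only [Finset.mem_filter, Finset.mem_univ, true_and] at ha ⊢
          refine ⟨?_, ha.2.mul u₀.isUnit⟩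
          rw [map_mul, ha.1, hπu₀, one_mul]
        · intro a _
          simp [mul_assoc]
        · intro a _
          simp [mul_assoc]
      have hχmy : χm y = χ' (ZMod.cast y) := by
        have h6 := DirichletCharacter.changeLevel_eq_cast_of_dvd χ' hq'm hy.unit
        rwa [IsUnit.unit_spec] at h6
      rw [hrestrict, Finset.sum_congr rfl (fun x hx => by
        simp only [Finset.mem_filter, Finset.mem_univ, true_and] at hx
        exact hval x hx.1 hx.2), Finset.sum_const, nsmul_eq_mul, hcard, hχmy]
    · -- nonunit case
      have h0 : ∀ x ∈ Finset.univ.filter (fun x : ZMod q => π x = y),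
          (DirichletCharacter.changeLevel hdvd χ') x = 0 := by
        intro x hx
        simp only [Finset.mem_filter, Finset.mem_univ, true_and] at hx
        refine (DirichletCharacter.changeLevel hdvd χ').map_nonunit (fun hu => hy ?_)
        rw [← hx]
        exact hu.map π
      rw [Finset.sum_eq_zero h0, χm.map_nonunit hy, mul_zero]
  have stepA : ∑ x : ZMod q, (DirichletCharacter.changeLevel hdvd χ') x * ψm ((n₁ : ZMod m) * π x)
      = (K : ℂ) * τm := by
    rw [← Finset.sum_fiberwise Finset.univ (fun x : ZMod q => π x)
      (fun x => (DirichletCharacter.changeLevel hdvd χ') x * ψm ((n₁ : ZMod m) * π x))]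
    rw [hτm, Finset.mul_sum]
    refine Finset.sum_congr rfl fun y _ => ?_
    have hterm : ∑ x ∈ Finset.univ.filter (fun x : ZMod q => π x = y),
        (DirichletCharacter.changeLevel hdvd χ') x * ψm ((n₁ : ZMod m) * π x)
        = ∑ x ∈ Finset.univ.filter (fun x : ZMod q => π x = y),
        (DirichletCharacter.changeLevel hdvd χ') x * ψm ((n₁ : ZMod m) * y) := by
      refine Finset.sum_congr rfl fun x hx => ?_
      simp only [Finset.mem_filter, Finset.mem_univ, true_and] at hx
      rw [hx]
    rw [hterm, ← Finset.sum_mul, fibchi y]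
    ring
  have hKg : K ≤ g := by
    rw [hK]
    have hcard : (Finset.univ.filter (fun x : ZMod q => π x = 1 ∧ IsUnit x)).card
        ≤ (Finset.range g).card := by
      apply Finset.card_le_card_of_injOn (fun x => x.val / m)
      · intro x _
        rw [Finset.mem_coe, Finset.mem_range]
        apply Nat.div_lt_of_lt_mul
        exact x.val_lt.trans_eq (by rw [hqgm]; exact Nat.mul_comm g m)
      · intro a ha b hb hab
        simp only [Finset.coe_filter, Set.mem_setOf_eq, Finset.mem_univ, true_and] at ha hb
        have hπval : ∀ z : ZMod q, (π z).val = z.val % m := by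
          intro z
          rw [hπdef, ZMod.castHom_apply, ← ZMod.natCast_val z, ZMod.val_natCast]
        have hmod : a.val % m = b.val % m := by
          rw [← hπval a, ← hπval b, ha.1, hb.1]
        have hval : a.val = b.val := by
          have hab' : a.val / m = b.val / m := hab
          conv_lhs => rw [← Nat.div_add_mod a.val m]
          conv_rhs => rw [← Nat.div_add_mod b.val m]
          rw [hab', hmod]
        have := congrArg (fun t : ℕ => (t : ZMod q)) hval
        simpa only [ZMod.natCast_rightInverse a, ZMod.natCast_rightInverse b] using this
    simpa using hcard
  -- Step B
  have stepB : τm = ((ArithmeticFunction.moebius h : ℤ) : ℂ) * χ' ((h : ZMod q'))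
      * (χ'⁻¹ ((n₁ : ZMod q')) * gaussSum χ' ψ') := by
    -- Split χm into χ' ∘ π' and a coprimality indicator
    have hsplit : ∀ y : ZMod m, χm y
        = χ' (π' y) * (if Nat.gcd y.val h = 1 then (1:ℂ) else 0) := by
      intro y
      by_cases hy : IsUnit y
      · have hco : Nat.Coprime y.val m := by
          have h8 := ZMod.val_coe_unit_coprime hy.unit
          rwa [IsUnit.unit_spec] at h8
        have hcoh : Nat.Coprime y.val h := Nat.Coprime.coprime_dvd_right hhm hco
        rw [if_pos hcoh, mul_one]
        have h6 := DirichletCharacter.changeLevel_eq_cast_of_dvd χ' hq'm hy.unit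
        rw [IsUnit.unit_spec] at h6
        rw [hχm, h6, hπ'def, ZMod.castHom_apply]
      · rw [χm.map_nonunit hy]
        have hnc : ¬ Nat.Coprime y.val m := by
          intro hco
          apply hy
          have h8 := (ZMod.isUnit_iff_coprime y.val m).mpr hco
          rwa [ZMod.natCast_rightInverse y] at h8
        by_cases hch : Nat.Coprime y.val h
        · have hcq : ¬ Nat.Coprime y.val q' := fun hc => hnc (Nat.Coprime.mul_right hc hch)
          have hnu : ¬ IsUnit (π' y) := by
            intro hu
            apply hcq
            have h8 := ZMod.val_coe_unit_coprime hu.unit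
            rw [IsUnit.unit_spec] at h8
            have h9 : (π' y).val = y.val % q' := by
              rw [hπ'def, ZMod.castHom_apply, ← ZMod.natCast_val y, ZMod.val_natCast]
            rw [h9] at h8
            have h10 : Nat.gcd y.val q' = Nat.gcd (y.val % q') q' := by
              rw [Nat.gcd_comm y.val q', Nat.gcd_rec]
            exact Nat.Coprime.symm (h10 ▸ h8 : Nat.gcd y.val q' = 1) |>.symm
          rw [MulChar.map_nonunit χ' hnu, zero_mul]
        · rw [if_neg hch, mul_zero]
    -- Moebius expansion of the indicator
    have hmoeb : ∀ y : ZMod m, (if Nat.gcd y.val h = 1 then (1:ℂ) else 0)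
        = ∑ d ∈ h.divisors,
          (if d ∣ y.val then ((ArithmeticFunction.moebius d : ℤ) : ℂ) else 0) := by
      intro y
      have hdiv : (Nat.gcd y.val h).divisors = h.divisors.filter (· ∣ y.val) := by
        ext d
        simp only [Nat.mem_divisors, Finset.mem_filter, Nat.dvd_gcd_iff]
        constructor
        · rintro ⟨⟨hd1, hd2⟩, _⟩; exact ⟨⟨hd2, hh0⟩, hd1⟩
        · rintro ⟨⟨hd2, _⟩, hd1⟩
          exact ⟨⟨hd1, hd2⟩, Nat.gcd_ne_zero_right hh0⟩
      have hmz : ∑ d ∈ (Nat.gcd y.val h).divisors, (ArithmeticFunction.moebius d : ℤ)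
          = if Nat.gcd y.val h = 1 then 1 else 0 := by
        have h11 : (ArithmeticFunction.moebius * ↑ArithmeticFunction.zeta
            : ArithmeticFunction ℤ) (Nat.gcd y.val h)
            = (1 : ArithmeticFunction ℤ) (Nat.gcd y.val h) := by
          rw [ArithmeticFunction.moebius_mul_coe_zeta]
        rwa [ArithmeticFunction.coe_mul_zeta_apply, ArithmeticFunction.one_apply] at h11
      rw [eq_comm, ← Finset.sum_filter, ← hdiv]
      calc ∑ d ∈ (Nat.gcd y.val h).divisors, ((ArithmeticFunction.moebius d : ℤ) : ℂ)
          = ((∑ d ∈ (Nat.gcd y.val h).divisors, ArithmeticFunction.moebius d : ℤ) : ℂ) := by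
            push_cast; rfl
        _ = _ := by rw [hmz]; split_ifs <;> simp
    -- Expand τm as a sum over divisors
    have expand : τm = ∑ d ∈ h.divisors, ((ArithmeticFunction.moebius d : ℤ) : ℂ) *
        ∑ y : ZMod m, (if d ∣ y.val then χ' (π' y) * ψm ((n₁ : ZMod m) * y) else 0) := by
      have step1 : ∀ y : ZMod m, (χ' (π' y) * ∑ d ∈ h.divisors,
          (if d ∣ y.val then ((ArithmeticFunction.moebius d : ℤ) : ℂ) else 0))
          * ψm ((n₁ : ZMod m) * y)
          = ∑ d ∈ h.divisors, ((ArithmeticFunction.moebius d : ℤ) : ℂ) *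
            (if d ∣ y.val then χ' (π' y) * ψm ((n₁ : ZMod m) * y) else 0) := by
        intro y
        rw [Finset.mul_sum, Finset.sum_mul]
        refine Finset.sum_congr rfl fun d _ => ?_
        split_ifs <;> ring
      rw [hτm]
      rw [Finset.sum_congr rfl fun y _ => by rw [hsplit y, hmoeb y, step1 y]]
      rw [Finset.sum_comm]
      exact Finset.sum_congr rfl fun d _ => (Finset.mul_sum _ _ _).symm
    -- Vanishing of all terms except d = h
    have hvanish : ∀ d ∈ h.divisors, d ≠ h →
        (∑ y : ZMod m, if d ∣ y.val then χ' (π' y) * ψm ((n₁ : ZMod m) * y) else 0) = 0 := by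
      intro d hd hdh
      have hdh' : d ∣ h := (Nat.mem_divisors.mp hd).1
      have hdlt : d < h := lt_of_le_of_ne (Nat.le_of_dvd (Nat.pos_of_ne_zero hh0) hdh') hdh
      have hd0 : d ≠ 0 := by
        rintro rfl
        exact hh0 (Nat.eq_zero_of_zero_dvd hdh')
      set k := h / d with hkdef
      have hdk : h = d * k := (Nat.mul_div_cancel' hdh').symm
      have hk1 : k ≠ 1 := by rintro hk1; rw [hk1, mul_one] at hdk; exact hdh hdk.symm
      have hk0 : k ≠ 0 := by rintro h0; rw [h0, mul_zero] at hdk; exact hh0 hdk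
      set c : ZMod m := ((d * q' : ℕ) : ZMod m) with hc
      have hcval : c.val = d * q' := by
        rw [hc, ZMod.val_natCast, Nat.mod_eq_of_lt]
        calc d * q' < h * q' := (Nat.mul_lt_mul_right (Nat.pos_of_ne_zero hq'0)).mpr hdlt
          _ = m := by rw [hmdef]; ring
      set ω : ℂ := ψm ((n₁ : ZMod m) * c) with hω
      have hωval : ω = Complex.exp (2 * Real.pi * Complex.I * (n₁ : ℂ) / (k : ℂ)) := by
        have harg : (n₁ : ZMod m) * c = (((n₁ * (d * q') : ℕ) : ℤ) : ZMod m) := by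
          rw [hc]; push_cast; ring
        rw [hω, hψm, harg, ZMod.stdAddChar_coe]
        have hmeq : (m : ℂ) = (q' : ℂ) * d * k := by
          have : m = q' * d * k := by rw [hmdef, hdk]; ring
          exact_mod_cast congrArg (Nat.cast (R := ℂ)) this
        rw [hmeq]
        have hq'c : (q' : ℂ) ≠ 0 := Nat.cast_ne_zero.mpr hq'0
        have hdc : (d : ℂ) ≠ 0 := Nat.cast_ne_zero.mpr hd0
        have hkc : (k : ℂ) ≠ 0 := Nat.cast_ne_zero.mpr hk0
        congr 1
        push_cast
        field_simp
      have hω1 : ω ≠ 1 := by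
        rw [hωval]
        intro heq
        obtain ⟨t, ht⟩ := Complex.exp_eq_one_iff.mp heq
        have hkc : (k : ℂ) ≠ 0 := Nat.cast_ne_zero.mpr hk0
        have h2πI : (2 * (Real.pi : ℂ) * Complex.I) ≠ 0 := by
          simp [Real.pi_ne_zero, Complex.I_ne_zero]
        have hn₁ : (n₁ : ℂ) = (t : ℂ) * k := by
          have h2 : 2 * (Real.pi : ℂ) * Complex.I * (n₁ : ℂ)
              = 2 * (Real.pi : ℂ) * Complex.I * ((t : ℂ) * k) := by
            field_simp at ht
            linear_combination (2 * (Real.pi : ℂ) * Complex.I) * ht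
          exact mul_left_cancel₀ h2πI h2
        have hn₁' : (n₁ : ℤ) = t * k := by exact_mod_cast hn₁
        have hkdvd : k ∣ n₁ := by
          have : (k : ℤ) ∣ (n₁ : ℤ) := ⟨t, by linarith⟩
          exact_mod_cast this
        have hkg : k ∣ Nat.gcd n₁ h := Nat.dvd_gcd hkdvd ⟨d, by rw [hdk]; ring⟩
        have : k ∣ 1 := hcop ▸ hkg
        exact hk1 (Nat.dvd_one.mp this)
      have htrans : (∑ y : ZMod m, if d ∣ y.val then χ' (π' y) * ψm ((n₁ : ZMod m) * y) else 0)
          = ω * ∑ y : ZMod m,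
            (if d ∣ y.val then χ' (π' y) * ψm ((n₁ : ZMod m) * y) else 0) := by
        rw [Finset.mul_sum]
        rw [← Equiv.sum_comp (Equiv.addRight c)
          (fun y : ZMod m => if d ∣ y.val then χ' (π' y) * ψm ((n₁ : ZMod m) * y) else 0)]
        refine Finset.sum_congr rfl fun y _ => ?_
        have hcond : (d ∣ ((Equiv.addRight c) y).val) ↔ (d ∣ y.val) := by
          simp only [Equiv.coe_addRight]
          rw [ZMod.val_add, hcval]
          have hdm : d ∣ m := dvd_trans hdh' hhm
          rw [Nat.dvd_mod_iff hdm]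
          constructor
          · intro h2
            rw [Nat.add_comm] at h2
            exact (Nat.dvd_add_right (dvd_mul_right d q')).mp h2
          · intro h2
            rw [Nat.add_comm]
            exact (Nat.dvd_add_right (dvd_mul_right d q')).mpr h2
        rw [if_congr hcond rfl rfl]
        by_cases hdy : d ∣ y.val
        · rw [if_pos hdy, if_pos hdy]
          have hπ'c : π' ((Equiv.addRight c) y) = π' y := by
            simp only [Equiv.coe_addRight]
            rw [map_add]
            have hzero : π' c = 0 := by
              rw [hc, map_natCast, ZMod.natCast_eq_zero_iff]
              exact dvd_mul_left q' d
            rw [hzero, add_zero]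
          have hψc : ψm ((n₁ : ZMod m) * ((Equiv.addRight c) y))
              = ω * ψm ((n₁ : ZMod m) * y) := by
            simp only [Equiv.coe_addRight]
            rw [mul_add, AddChar.map_add_eq_mul, hω]
            ring
          rw [hπ'c, hψc]
          ring
        · rw [if_neg hdy, if_neg hdy, mul_zero]
      have h3 : (1 - ω) * (∑ y : ZMod m,
          if d ∣ y.val then χ' (π' y) * ψm ((n₁ : ZMod m) * y) else 0) = 0 := by
        rw [sub_mul, one_mul, ← htrans, sub_self]
      rcases mul_eq_zero.mp h3 with h4 | h4
      · exact absurd (sub_eq_zero.mp h4).symm hω1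
      · exact h4
    -- Main term d = h
    have hmain : (∑ y : ZMod m, if h ∣ y.val then χ' (π' y) * ψm ((n₁ : ZMod m) * y) else 0)
        = χ' ((h : ZMod q')) * (χ'⁻¹ ((n₁ : ZMod q')) * gaussSum χ' ψ') := by
      have hgs : gaussSum χ' (ψ'.mulShift ((n₁ : ZMod q')))
          = χ'⁻¹ ((n₁ : ZMod q')) * gaussSum χ' ψ' :=
        gaussSum_mulShift_of_isPrimitive ψ' hprim _
      rw [← hgs, gaussSum, Finset.mul_sum, ← Finset.sum_filter]
      symm
      refine Finset.sum_nbij' (fun w : ZMod q' => ((h * w.val : ℕ) : ZMod m))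
        (fun y : ZMod m => ((y.val / h : ℕ) : ZMod q')) ?_ ?_ ?_ ?_ ?_
      · intro w _
        simp only [Finset.mem_filter, Finset.mem_univ, true_and]
        rw [ZMod.val_natCast, Nat.mod_eq_of_lt]
        · exact Dvd.intro w.val rfl
        · calc h * w.val < h * q' := (Nat.mul_lt_mul_left (Nat.pos_of_ne_zero hh0)).mpr w.val_lt
            _ = m := by rw [hmdef]; exact Nat.mul_comm h q'
      · intro y _
        exact Finset.mem_univ _
      · intro w _
        have hlt : h * w.val < m := by
          calc h * w.val < h * q' := (Nat.mul_lt_mul_left (Nat.pos_of_ne_zero hh0)).mpr w.val_lt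
            _ = m := by rw [hmdef]; exact Nat.mul_comm h q'
        show ((((h * w.val : ℕ) : ZMod m).val / h : ℕ) : ZMod q') = w
        rw [ZMod.val_natCast, Nat.mod_eq_of_lt hlt, Nat.mul_div_cancel_left _
          (Nat.pos_of_ne_zero hh0)]
        exact ZMod.natCast_rightInverse w
      · intro y hy
        simp only [Finset.mem_filter, Finset.mem_univ, true_and] at hy
        have hwlt : y.val / h < q' := by
          apply Nat.div_lt_of_lt_mul
          calc y.val < m := y.val_lt
            _ = h * q' := by rw [hmdef]; exact Nat.mul_comm q' h
        show ((h * (((y.val / h : ℕ) : ZMod q')).val : ℕ) : ZMod m) = y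
        rw [ZMod.val_natCast, Nat.mod_eq_of_lt hwlt, Nat.mul_div_cancel' hy]
        exact ZMod.natCast_rightInverse y
      · intro w _
        show χ' ((h : ZMod q')) * (χ' w * (ψ'.mulShift ((n₁ : ZMod q'))) w)
            = χ' (π' (((h * w.val : ℕ) : ZMod m)))
              * ψm ((n₁ : ZMod m) * ((h * w.val : ℕ) : ZMod m))
        have hπ'w : π' (((h * w.val : ℕ) : ZMod m)) = (h : ZMod q') * w := by
          rw [map_natCast]
          push_cast
          rw [ZMod.natCast_rightInverse w]
        have harg : (n₁ : ZMod m) * ((h * w.val : ℕ) : ZMod m)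
            = (((n₁ * (h * w.val) : ℕ) : ℤ) : ZMod m) := by push_cast; ring
        have harg' : (n₁ : ZMod q') * w = (((n₁ * w.val : ℕ) : ℤ) : ZMod q') := by
          conv_lhs => rw [← ZMod.natCast_rightInverse w]
          push_cast
          ring
        have hψeq : ψm ((n₁ : ZMod m) * ((h * w.val : ℕ) : ZMod m))
            = ψ' ((n₁ : ZMod q') * w) := by
          rw [hψm, hψ', harg, harg', ZMod.stdAddChar_coe, ZMod.stdAddChar_coe]
          have hq'c : (q' : ℂ) ≠ 0 := Nat.cast_ne_zero.mpr hq'0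
          have hhc : (h : ℂ) ≠ 0 := Nat.cast_ne_zero.mpr hh0
          have hmeq : (m : ℂ) = (q' : ℂ) * h := by
            exact_mod_cast congrArg (Nat.cast (R := ℂ)) hmdef
          rw [hmeq]
          congr 1
          push_cast
          field_simp
        rw [hπ'w, map_mul, AddChar.mulShift_apply, hψeq]
        ring
    rw [expand]
    rw [Finset.sum_eq_single_of_mem h (Nat.mem_divisors_self h hh0)
      (fun d hd hdh => by rw [hvanish d hd hdh, mul_zero])]
    rw [hmain]
    ring
  -- assemble
  have habs : ‖τm‖ ≤ Real.sqrt q' := by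
    rw [stepB, norm_mul, norm_mul, norm_mul]
    have h4 : ‖gaussSum χ' ψ'‖ = Real.sqrt q' := aux_abs_gaussSum q' χ' hprim
    rw [h4]
    have h1 : ‖((ArithmeticFunction.moebius h : ℤ) : ℂ)‖ ≤ 1 := by
      rcases eq_or_ne (ArithmeticFunction.moebius h) 0 with h0 | h0
      · simp [h0]
      · rcases ArithmeticFunction.moebius_ne_zero_iff_eq_or.mp h0 with h5 | h5 <;> simp [h5]
    have h2 : ‖χ' ((h : ZMod q'))‖ ≤ 1 := by
      have := DirichletCharacter.norm_le_one χ' ((h : ZMod q'))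
      exact this
    have h3 : ‖(χ'⁻¹ : DirichletCharacter ℂ q') ((n₁ : ZMod q'))‖ ≤ 1 := by
      have := DirichletCharacter.norm_le_one (χ'⁻¹ : DirichletCharacter ℂ q') ((n₁ : ZMod q'))
      exact this
    calc ‖((ArithmeticFunction.moebius h : ℤ) : ℂ)‖
        * ‖χ' ((h : ZMod q'))‖
        * (‖(χ'⁻¹ : DirichletCharacter ℂ q') ((n₁ : ZMod q'))‖ * Real.sqrt q')
        ≤ 1 * 1 * (1 * Real.sqrt q') := by
          gcongr <;> first | exact norm_nonneg _ | positivity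
      _ = Real.sqrt q' := by ring
  rw [glue, stepA, norm_mul, Complex.norm_natCast]
  calc (K : ℝ) * ‖τm‖ ≤ (g : ℝ) * Real.sqrt q' := by
        apply mul_le_mul (by exact_mod_cast hKg) habs (norm_nonneg _) (by positivity)
    _ = Real.sqrt q' * (Nat.gcd n (q / q')) := by rw [mul_comm]
end

section
/- Let χ be a primitive Dirichlet character modulo q and h an integer. Then Σ_{x mod q, gcd(x,q)=1} χ(x+h) conj(χ)(x) = S(h, 0; q), the Ramanujan sum Σ_{r mod q, gcd(r,q)=1} e_q(hr). -/
set_option maxHeartbeats 1000000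


open Complex Finset DirichletCharacter

private lemma aux_sum_units_eq {q : ℕ} [NeZero q] (f : ZMod q → ℂ)
    (hf : ∀ x : ZMod q, ¬IsUnit x → f x = 0) :
    ∑ u : (ZMod q)ˣ, f (u : ZMod q) = ∑ x : ZMod q, f x := by
  classical
  rw [← Finset.sum_filter_of_ne (p := fun x : ZMod q => IsUnit x)
      (fun x _ hfx => by by_contra hx; exact hfx (hf x hx))]
  refine Finset.sum_nbij' (fun u : (ZMod q)ˣ => (u : ZMod q))
    (fun x => if h : IsUnit x then h.unit else 1) ?_ ?_ ?_ ?_ ?_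
  · intro u _; simp [u.isUnit]
  · intro x _; simp
  · intro u _
    simp only [Units.isUnit, dite_true]
    exact Units.ext (by simp)
  · intro x hx
    rcases Finset.mem_filter.mp hx with ⟨_, hux⟩
    simp [hux]
  · intro u _; rfl

private lemma aux_factorsThrough_inv_iff {q : ℕ} [NeZero q] (χ : DirichletCharacter ℂ q)
    (d : ℕ) : FactorsThrough χ⁻¹ d ↔ FactorsThrough χ d := by
  by_cases hd : d ∣ q
  · rw [factorsThrough_iff_ker_unitsMap hd, factorsThrough_iff_ker_unitsMap hd]
    have hker : χ⁻¹.toUnitHom.ker = χ.toUnitHom.ker := by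
      ext u
      simp only [MonoidHom.mem_ker, ← Units.val_inj, MulChar.coe_toUnitHom, Units.val_one]
      rw [MulChar.inv_apply_eq_inv', inv_eq_one]
    rw [hker]
  · exact ⟨fun hft => absurd hft.dvd hd, fun hft => absurd hft.dvd hd⟩

private lemma aux_isPrimitive_inv {q : ℕ} [NeZero q] (χ : DirichletCharacter ℂ q)
    (hχ : χ.IsPrimitive) : (χ⁻¹ : DirichletCharacter ℂ q).IsPrimitive := by
  have hset : conductorSet χ⁻¹ = conductorSet χ := by
    ext d
    exact aux_factorsThrough_inv_iff χ d
  rw [isPrimitive_def, DirichletCharacter.conductor, hset,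
    ← DirichletCharacter.conductor]
  exact hχ

private lemma aux_gaussSum_ne_zero {q : ℕ} [NeZero q] {χ : DirichletCharacter ℂ q}
    (hχ : χ.IsPrimitive) : gaussSum χ ZMod.stdAddChar ≠ 0 := by
  intro h0
  have h1 : ZMod.dft (fun x : ZMod q => χ x) = 0 := by
    ext k
    rw [show ZMod.dft (fun x : ZMod q => χ x) k
        = χ⁻¹ (-k) * gaussSum χ ZMod.stdAddChar from
      DirichletCharacter.IsPrimitive.fourierTransform_eq_inv_mul_gaussSum hχ k, h0, mul_zero]
    rfl
  have h2 := congrFun (ZMod.dft_dft (fun x : ZMod q => χ x)) (-1)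
  rw [h1] at h2
  simp only [ZMod.dft_apply, Pi.zero_apply, smul_eq_mul, mul_zero, Finset.sum_const_zero,
    neg_neg, map_one, mul_one] at h2
  exact NeZero.ne (q : ℂ) h2.symm

/-- For a primitive Dirichlet character `χ` mod `q` and integer `h`,
`Σ_{x mod q, (x,q)=1} χ(x+h) conj(χ)(x)` equals the Ramanujan sum
`S(h,0;q) = Σ_{r mod q, (r,q)=1} e_q(hr)`. -/
theorem stmt_15 (q : ℕ) [NeZero q] (χ : DirichletCharacter ℂ q)
    (hprim : χ.IsPrimitive) (h : ℤ) :
    (∑ x : (ZMod q)ˣ, χ ((x : ZMod q) + (h : ZMod q)) * (starRingEnd ℂ) (χ (x : ZMod q)))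
      = ∑ r : (ZMod q)ˣ,
          Complex.exp (2 * Real.pi * Complex.I *
            ((((h : ZMod q) * (r : ZMod q)).val : ℕ) : ℂ) / (q : ℂ)) := by
  -- rewrite the RHS in terms of the standard additive character
  have hRHS : ∀ r : (ZMod q)ˣ,
      Complex.exp (2 * Real.pi * Complex.I *
            ((((h : ZMod q) * (r : ZMod q)).val : ℕ) : ℂ) / (q : ℂ))
        = ZMod.stdAddChar ((h : ZMod q) * (r : ZMod q)) := by
    intro r
    have := ZMod.stdAddChar_coe (N := q) (((h : ZMod q) * (r : ZMod q)).val : ℤ)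
    rw [show ((((((h : ZMod q) * (r : ZMod q)).val : ℤ)) : ZMod q))
        = (h : ZMod q) * (r : ZMod q) by push_cast [ZMod.natCast_val, ZMod.cast_id]; ring] at this
    rw [this]
    push_cast
    ring_nf
  simp only [hRHS]
  -- trivial case q = 1
  rcases eq_or_ne q 1 with hq | hq
  · subst hq
    have h1 : χ (0 : ZMod 1) = 1 := by
      rw [show (0 : ZMod 1) = 1 from Subsingleton.elim _ _, map_one]
    simp [show ∀ x : ZMod 1, x = 0 from fun x => Subsingleton.elim x 0, h1]
  -- now the main case
  set e : AddChar (ZMod q) ℂ := ZMod.stdAddChar with he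
  have heprim : e.IsPrimitive := ZMod.isPrimitive_stdAddChar q
  have hψ : (χ⁻¹ : DirichletCharacter ℂ q).IsPrimitive := aux_isPrimitive_inv χ hprim
  set g : ℂ := gaussSum χ⁻¹ e with hg
  have hχne : χ ≠ 1 := by
    intro h1
    rw [eq_one_iff_conductor_eq_one] at h1
    exact hq (hprim.symm.trans h1)
  have hgne : g ≠ 0 := aux_gaussSum_ne_zero hψ
  -- key inversion formula
  have key : ∀ m : ZMod q, (∑ y : ZMod q, χ⁻¹ y * e (m * y)) = χ m * g := by
    intro m
    have : (∑ y : ZMod q, χ⁻¹ y * e (m * y)) = gaussSum χ⁻¹ (e.mulShift m) := by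
      simp [gaussSum, AddChar.mulShift_apply]
    rw [this, gaussSum_mulShift_of_isPrimitive e hψ m, inv_inv]
  -- conj χ = χ⁻¹
  have hconj : ∀ x : ZMod q, (starRingEnd ℂ) (χ x) = χ⁻¹ x := fun x =>
    MulChar.star_apply' χ x
  -- multiply both sides by g and compute
  have main : (∑ x : (ZMod q)ˣ, χ ((x : ZMod q) + (h : ZMod q))
        * (starRingEnd ℂ) (χ (x : ZMod q))) * g
      = (∑ r : (ZMod q)ˣ, e ((h : ZMod q) * (r : ZMod q))) * g := by
    calc (∑ x : (ZMod q)ˣ, χ ((x : ZMod q) + (h : ZMod q))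
          * (starRingEnd ℂ) (χ (x : ZMod q))) * g
        = ∑ x : (ZMod q)ˣ, (χ ((x : ZMod q) + (h : ZMod q)) * g) * χ⁻¹ (x : ZMod q) := by
          rw [Finset.sum_mul]; exact Finset.sum_congr rfl fun x _ => by rw [hconj]; ring
      _ = ∑ x : (ZMod q)ˣ, (∑ y : ZMod q, χ⁻¹ y * e (((x : ZMod q) + (h : ZMod q)) * y))
            * χ⁻¹ (x : ZMod q) := by
          exact Finset.sum_congr rfl fun x _ => by rw [key]
      _ = ∑ x : (ZMod q)ˣ, ∑ y : ZMod q,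
            χ⁻¹ y * e (((x : ZMod q) + (h : ZMod q)) * y) * χ⁻¹ (x : ZMod q) := by
          exact Finset.sum_congr rfl fun x _ => Finset.sum_mul _ _ _
      _ = ∑ y : ZMod q, ∑ x : (ZMod q)ˣ,
            χ⁻¹ y * e (((x : ZMod q) + (h : ZMod q)) * y) * χ⁻¹ (x : ZMod q) :=
          Finset.sum_comm
      _ = ∑ y : ZMod q, χ⁻¹ y * e ((h : ZMod q) * y)
            * ∑ x : (ZMod q)ˣ, χ⁻¹ (x : ZMod q) * e ((x : ZMod q) * y) := by
          refine Finset.sum_congr rfl fun y _ => ?_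
          rw [Finset.mul_sum]
          refine Finset.sum_congr rfl fun x _ => ?_
          rw [add_mul, AddChar.map_add_eq_mul]
          ring
      _ = ∑ y : ZMod q, χ⁻¹ y * e ((h : ZMod q) * y) * (χ y * g) := by
          refine Finset.sum_congr rfl fun y _ => ?_
          congr 1
          rw [show (∑ x : (ZMod q)ˣ, χ⁻¹ (x : ZMod q) * e ((x : ZMod q) * y))
              = ∑ x : ZMod q, χ⁻¹ x * e (x * y) from
            aux_sum_units_eq (fun x => χ⁻¹ x * e (x * y)) (fun x hx => by
              show χ⁻¹ x * e (x * y) = 0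
              rw [MulChar.map_nonunit _ hx, zero_mul])]
          rw [show (∑ x : ZMod q, χ⁻¹ x * e (x * y)) = ∑ x : ZMod q, χ⁻¹ x * e (y * x) by
            refine Finset.sum_congr rfl fun x _ => by rw [mul_comm x y]]
          exact key y
      _ = (∑ y : ZMod q, (χ⁻¹ * χ) y * e ((h : ZMod q) * y)) * g := by
          rw [Finset.sum_mul]
          refine Finset.sum_congr rfl fun y _ => ?_
          rw [MulChar.coeToFun_mul, Pi.mul_apply]
          ring
      _ = (∑ r : (ZMod q)ˣ, e ((h : ZMod q) * (r : ZMod q))) * g := by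
          congr 1
          rw [MulChar.inv_mul]
          rw [show (∑ y : ZMod q, (1 : DirichletCharacter ℂ q) y * e ((h : ZMod q) * y))
              = ∑ u : (ZMod q)ˣ, (1 : DirichletCharacter ℂ q) (u : ZMod q)
                  * e ((h : ZMod q) * (u : ZMod q)) from
            (aux_sum_units_eq (fun y => (1 : DirichletCharacter ℂ q) y * e ((h : ZMod q) * y))
              (fun y hy => by
                show (1 : DirichletCharacter ℂ q) y * e ((h : ZMod q) * y) = 0
                rw [MulChar.map_nonunit _ hy, zero_mul])).symm]
          refine Finset.sum_congr rfl fun r _ => ?_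
          rw [MulChar.one_apply_coe, one_mul]
  exact mul_right_cancel₀ hgne main
end
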